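/- Let Ω ⊂ ℝ^N be an arbitrary domain and p ∈ [1,∞). Every bounded sequence (v_n) ⊂ L^p(Ω) has a subsequence (v_{k(n)}) such that the truncated sequence (η_n ∘ v_{k(n)}) does not concentrate in L^p(Ω), i.e., sup_{E ⊂ Ω, |E| ≤ δ} ∫_E |η_n(v_{k(n)}(x))|^p dx → 0 as δ → 0, uniformly in n ∈ ℕ. Here η_λ(t) = max(-λ, min(λ, t)) is scalar truncation at level λ. -/

import Mathlib

open MeasureTheory Set Filter
open scoped ENNReal NNReal

/-- Every bounded sequence in `L^p(Ω)` has a subsequence whose truncations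
`η_n ∘ v_{k(n)}` (truncation of the values at level `n`) do not concentrate in `L^p(Ω)`:
integrals over sets of small measure are small, uniformly in `n`. -/
theorem truncated_subsequence_does_not_concentrate {N : ℕ}
    (Ω : Set (EuclideanSpace ℝ (Fin N))) (hΩo : IsOpen Ω) (hΩc : IsConnected Ω)
    (p : ℝ) (hp : 1 ≤ p)
    (v : ℕ → EuclideanSpace ℝ (Fin N) → ℝ)
    (hmeas : ∀ n, AEStronglyMeasurable (v n) (volume.restrict Ω))
    (hint : ∀ n, Integrable (fun x => |v n x| ^ p) (volume.restrict Ω))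
    (hbdd : ∃ C : ℝ, ∀ n, ∫ x in Ω, |v n x| ^ p ≤ C) :
    ∃ k : ℕ → ℕ, StrictMono k ∧
      ∀ ε > (0:ℝ), ∃ δ > (0:ℝ), ∀ n : ℕ, ∀ E : Set (EuclideanSpace ℝ (Fin N)),
        E ⊆ Ω → MeasurableSet E → volume E ≤ ENNReal.ofReal δ →
        ∫ x in E, |max (-(n:ℝ)) (min (n:ℝ) (v (k n) x))| ^ p ≤ ε := by
  classical
  obtain ⟨C, hC⟩ := hbdd
  have hp0 : (0:ℝ) ≤ p := by linarith
  -- pointwise truncation bound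
  have htrunc : ∀ (c t : ℝ), 0 ≤ c → |max (-c) (min c t)| ≤ min |t| c := by
    intro c t hc
    rw [abs_le]
    constructor
    · rcases le_total |t| c with h | h
      · rw [min_eq_left h]
        refine le_trans (le_min ?_ (neg_abs_le t) : -|t| ≤ min c t) (le_max_right _ _)
        linarith [abs_nonneg t]
      · rw [min_eq_right h]
        exact le_max_left _ _
    · refine max_le (le_min ?_ ?_) (le_min ((min_le_right c t).trans (le_abs_self t))
        (min_le_left c t)) <;> linarith [abs_nonneg t]
  have hrpow_cont : Continuous (fun t : ℝ => t ^ p) :=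
    continuous_iff_continuousAt.2 fun t => Real.continuousAt_rpow_const t p (Or.inr hp0)
  -- integrability of the truncated powers
  have hmin_int : ∀ (m j : ℕ),
      Integrable (fun x => min |v m x| (j:ℝ) ^ p) (volume.restrict Ω) := by
    intro m j
    refine (hint m).mono' ?_ ?_
    · exact (hrpow_cont.comp (continuous_abs.min continuous_const)).comp_aestronglyMeasurable
        (hmeas m)
    · filter_upwards with x
      have h0 : (0:ℝ) ≤ min |v m x| (j:ℝ) := le_min (abs_nonneg _) (Nat.cast_nonneg _)
      rw [Real.norm_eq_abs, abs_of_nonneg (Real.rpow_nonneg h0 p)]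
      exact Real.rpow_le_rpow h0 (min_le_left _ _) hp0
  set α : ℕ → ℕ → ℝ := fun m j => ∫ x in Ω, min |v m x| (j:ℝ) ^ p with hα_def
  have hα_nonneg : ∀ m j, 0 ≤ α m j := fun m j =>
    integral_nonneg fun x => Real.rpow_nonneg (le_min (abs_nonneg _) (Nat.cast_nonneg _)) p
  have hα_le : ∀ m j, α m j ≤ C := by
    intro m j
    refine le_trans (integral_mono (hmin_int m j) (hint m) fun x => ?_) (hC m)
    exact Real.rpow_le_rpow (le_min (abs_nonneg _) (Nat.cast_nonneg _)) (min_le_left _ _) hp0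
  have hα_mono : ∀ m, ∀ ⦃j j' : ℕ⦄, j ≤ j' → α m j ≤ α m j' := by
    intro m j j' hjj
    refine integral_mono (hmin_int m j) (hmin_int m j') fun x => ?_
    exact Real.rpow_le_rpow (le_min (abs_nonneg _) (Nat.cast_nonneg _))
      (min_le_min le_rfl (Nat.cast_le.2 hjj)) hp0
  -- diagonal subsequence via compactness of [0,C]^ℕ
  have hcomp : IsCompact (Set.pi univ fun _ : ℕ => Icc (0:ℝ) C) :=
    isCompact_univ_pi fun _ => isCompact_Icc
  have hmem : ∀ m, α m ∈ Set.pi univ fun _ : ℕ => Icc (0:ℝ) C := fun m j _ =>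
    ⟨hα_nonneg m j, hα_le m j⟩
  obtain ⟨a, ha_mem, σ, hσ_mono, hσ_tendsto⟩ := hcomp.tendsto_subseq hmem
  have hptw : ∀ j : ℕ, Tendsto (fun m => α (σ m) j) atTop (nhds (a j)) :=
    fun j => (tendsto_pi_nhds.1 hσ_tendsto) j
  have haC : ∀ j, a j ≤ C := fun j => (ha_mem j (mem_univ j)).2
  have hbdd_a : BddAbove (Set.range a) := ⟨C, by rintro _ ⟨j, rfl⟩; exact haC j⟩
  set A : ℝ := ⨆ j, a j with hA_def
  have ha_le_A : ∀ j, a j ≤ A := fun j => le_ciSup hbdd_a j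
  -- choose indices realizing uniform closeness at levels ≤ n
  have hMfun : ∀ n : ℕ, ∃ M : ℕ, ∀ m ≥ M, ∀ j ≤ n, |α (σ m) j - a j| ≤ 1/((n:ℝ)+1) := by
    intro n
    have hpos : (0:ℝ) < 1/((n:ℝ)+1) := by positivity
    have hall : ∀ᶠ m in atTop, ∀ j ∈ Finset.range (n+1), |α (σ m) j - a j| ≤ 1/((n:ℝ)+1) := by
      rw [eventually_all_finset]
      intro j _
      have := (hptw j).eventually (Metric.closedBall_mem_nhds (a j) hpos)
      filter_upwards [this] with m hm
      simpa [Metric.mem_closedBall, Real.dist_eq] using hm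
    obtain ⟨M, hM⟩ := eventually_atTop.1 hall
    exact ⟨M, fun m hm j hj => hM m hm j (Finset.mem_range_succ_iff.2 hj)⟩
  set Mf : ℕ → ℕ := fun n => (hMfun n).choose with hMf_def
  set ψ : ℕ → ℕ := fun n => Nat.rec (Mf 0) (fun n ih => max (Mf (n+1)) (ih + 1)) n with hψ_def
  have hψ_succ : ∀ n, ψ (n+1) = max (Mf (n+1)) (ψ n + 1) := fun n => rfl
  have hψ_mono : StrictMono ψ := strictMono_nat_of_lt_succ fun n => by
    rw [hψ_succ]; exact lt_of_lt_of_le (Nat.lt_succ_self _) (le_max_right _ _)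
  have hψ_ge : ∀ n, Mf n ≤ ψ n := by
    intro n
    cases n with
    | zero => exact le_rfl
    | succ n => rw [hψ_succ]; exact le_max_left _ _
  have hk_prop : ∀ n, ∀ j ≤ n, |α (σ (ψ n)) j - a j| ≤ 1/((n:ℝ)+1) :=
    fun n => (hMfun n).choose_spec (ψ n) (hψ_ge n)
  refine ⟨σ ∘ ψ, hσ_mono.comp hψ_mono, ?_⟩
  intro ε hε
  obtain ⟨j0, hj0⟩ : ∃ j : ℕ, A - ε/4 < a j :=
    exists_lt_of_lt_ciSup (by linarith : A - ε/4 < A)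
  obtain ⟨N0, hN0⟩ := exists_nat_gt (8/ε)
  have hN0' : (2:ℝ)/((N0:ℝ)+1) ≤ ε/4 := by
    rw [div_le_div_iff₀ (by positivity) (by norm_num)]
    rw [div_lt_iff₀ hε] at hN0
    nlinarith
  set M : ℕ := max N0 j0 with hM_def
  have hMp : (0:ℝ) ≤ (M:ℝ) ^ p := Real.rpow_nonneg (Nat.cast_nonneg _) p
  set δ : ℝ := ε / (2 * ((M:ℝ) ^ p + 1)) with hδ_def
  have hδ : 0 < δ := by apply div_pos hε; nlinarith
  refine ⟨δ, hδ, ?_⟩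
  intro n E hEsub hEmeas hEμ
  set m := σ (ψ n) with hm_def
  set w := v m with hw_def
  have hEfin : volume E < ⊤ := lt_of_le_of_lt hEμ ENNReal.ofReal_lt_top
  have hEreal : (volume E).toReal ≤ δ := ENNReal.toReal_le_of_le_ofReal hδ.le hEμ
  have hres_mono : volume.restrict E ≤ volume.restrict Ω :=
    Measure.restrict_mono hEsub le_rfl
  have hIminE : ∀ c : ℕ, IntegrableOn (fun x => min |w x| (c:ℝ) ^ p) E :=
    fun c => (hmin_int m c).mono_measure hres_mono
  have hIη : IntegrableOn (fun x => |max (-(n:ℝ)) (min (n:ℝ) (w x))| ^ p) E := by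
    refine (hIminE n).mono' ?_ ?_
    · have hg : Continuous (fun t : ℝ => |max (-(n:ℝ)) (min (n:ℝ) t)| ^ p) :=
        hrpow_cont.comp (continuous_abs.comp (continuous_const.max
          (continuous_const.min continuous_id)))
      exact hg.comp_aestronglyMeasurable ((hmeas m).mono_measure hres_mono)
    · filter_upwards with x
      rw [Real.norm_eq_abs, abs_of_nonneg (Real.rpow_nonneg (abs_nonneg _) p)]
      exact Real.rpow_le_rpow (abs_nonneg _) (htrunc _ _ (Nat.cast_nonneg n)) hp0
  have h1 : ∫ x in E, |max (-(n:ℝ)) (min (n:ℝ) (v ((σ ∘ ψ) n) x))| ^ p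
      ≤ ∫ x in E, min |w x| (n:ℝ) ^ p := by
    refine integral_mono hIη (hIminE n) fun x => ?_
    exact Real.rpow_le_rpow (abs_nonneg _) (htrunc _ _ (Nat.cast_nonneg n)) hp0
  -- constant bound on small sets
  have hconst : ∀ c : ℕ, (c:ℝ) ≤ (M:ℝ) →
      ∫ x in E, min |w x| (c:ℝ) ^ p ≤ (M:ℝ) ^ p * δ := by
    intro c hc
    have h2 : ∫ x in E, min |w x| (c:ℝ) ^ p ≤ ∫ x in E, ((M:ℝ) ^ p) := by
      refine integral_mono (hIminE c) (integrableOn_const hEfin.ne) fun x => ?_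
      exact Real.rpow_le_rpow (le_min (abs_nonneg _) (Nat.cast_nonneg _))
        (le_trans (min_le_right _ _) hc) hp0
    rw [setIntegral_const, smul_eq_mul] at h2
    refine le_trans h2 ?_
    rw [mul_comm]
    exact mul_le_mul_of_nonneg_left hEreal hMp
  have hMδ : (M:ℝ) ^ p * δ ≤ ε / 2 := by
    rw [hδ_def, ← mul_div_assoc, div_le_div_iff₀ (by nlinarith) (by norm_num)]
    nlinarith
  rcases le_or_gt n M with hnM | hMn
  · -- small n : crude bound
    refine le_trans h1 (le_trans (hconst n (Nat.cast_le.2 hnM)) ?_)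
    linarith
  · -- large n
    have hj0M : j0 ≤ M := le_max_right _ _
    have hj0n : j0 ≤ n := le_trans hj0M hMn.le
    have hN0n : N0 ≤ n := le_trans (le_max_left _ _ : N0 ≤ M) hMn.le
    -- split the integral
    have hdiff_nonneg : ∀ x, 0 ≤ min |w x| (n:ℝ) ^ p - min |w x| (j0:ℝ) ^ p := by
      intro x
      have h := Real.rpow_le_rpow (x := min |w x| (j0:ℝ)) (y := min |w x| (n:ℝ))
        (le_min (abs_nonneg _) (Nat.cast_nonneg _))
        (min_le_min le_rfl (Nat.cast_le.2 hj0n)) hp0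
      linarith
    have hsplit : ∫ x in E, min |w x| (n:ℝ) ^ p
        ≤ (∫ x in E, min |w x| (j0:ℝ) ^ p) + (α m n - α m j0) := by
      have hsubE : ∫ x in E, (min |w x| (n:ℝ) ^ p - min |w x| (j0:ℝ) ^ p)
          = (∫ x in E, min |w x| (n:ℝ) ^ p) - ∫ x in E, min |w x| (j0:ℝ) ^ p :=
        integral_sub (hIminE n) (hIminE j0)
      have hsubΩ : ∫ x in Ω, (min |w x| (n:ℝ) ^ p - min |w x| (j0:ℝ) ^ p)
          = α m n - α m j0 := integral_sub (hmin_int m n) (hmin_int m j0)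
      have hEΩ : ∫ x in E, (min |w x| (n:ℝ) ^ p - min |w x| (j0:ℝ) ^ p)
          ≤ ∫ x in Ω, (min |w x| (n:ℝ) ^ p - min |w x| (j0:ℝ) ^ p) := by
        refine setIntegral_mono_set ((hmin_int m n).sub (hmin_int m j0)) ?_
          (HasSubset.Subset.eventuallyLE hEsub)
        filter_upwards with x using hdiff_nonneg x
      rw [hsubE, hsubΩ] at hEΩ
      linarith
    have habs1 := hk_prop n n le_rfl
    have habs2 := hk_prop n j0 hj0n
    rw [abs_le] at habs1 habs2
    have hanA := ha_le_A n
    have hfrac : (1:ℝ)/((n:ℝ)+1) ≤ 1/((N0:ℝ)+1) := by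
      apply div_le_div_of_nonneg_left (by norm_num) (by positivity)
      exact_mod_cast Nat.succ_le_succ hN0n
    have hα_bound : α m n - α m j0 ≤ ε / 2 := by
      have : α m n - α m j0 ≤ (A - a j0) + 2/((n:ℝ)+1) := by
        have h1' := habs1.2
        have h2' := habs2.1
        have h3' : α m n - α m j0 ≤ (a n + 1/((n:ℝ)+1)) - (a j0 - 1/((n:ℝ)+1)) := by linarith
        have h2eq : (2:ℝ)/((n:ℝ)+1) = 1/((n:ℝ)+1) + 1/((n:ℝ)+1) := by ring
        linarith [h3', hanA, h2eq]
      have h2n : (2:ℝ)/((n:ℝ)+1) ≤ ε/4 := by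
        have : (2:ℝ)/((n:ℝ)+1) ≤ 2/((N0:ℝ)+1) := by
          rw [div_le_div_iff₀ (by positivity) (by positivity)]
          have : ((N0:ℝ)+1) ≤ (n:ℝ)+1 := by
            exact_mod_cast Nat.succ_le_succ hN0n
          nlinarith
        linarith [hN0']
      linarith [hj0]
    have hcj0 := hconst j0 (Nat.cast_le.2 hj0M)
    calc ∫ x in E, |max (-(n:ℝ)) (min (n:ℝ) (v ((σ ∘ ψ) n) x))| ^ p
        ≤ ∫ x in E, min |w x| (n:ℝ) ^ p := h1
      _ ≤ (∫ x in E, min |w x| (j0:ℝ) ^ p) + (α m n - α m j0) := hsplit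
      _ ≤ (M:ℝ) ^ p * δ + ε / 2 := by linarith
      _ ≤ ε := by linarith [hMδ]
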